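/- Let X be a real inner product space with the standard 2-norm ‖x,y‖ = √(‖x‖²‖y‖² − ⟨x,y⟩²), z ∈ X fixed, x₀ ∈ X, and d₀ = inf_{y ∈ Y} ‖x₀ − y, z‖ for a nonempty convex set Y ⊆ X. If y₀, y₀' ∈ Y both satisfy ‖x₀ − y₀, z‖ = d₀ = ‖x₀ − y₀', z‖, then ‖y₀ − y₀', z‖ = 0, i.e., y₀ − y₀' is linearly dependent with z. -/

import Mathlib

theorem stmt13 {X : Type*} [NormedAddCommGroup X] [InnerProductSpace ℝ X]
    (N : X → X → ℝ)
    (hN : ∀ x y : X, N x y =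
      Real.sqrt (‖x‖ ^ 2 * ‖y‖ ^ 2 - (inner ℝ x y : ℝ) ^ 2))
    (z x₀ : X) (Y : Set X) (hYne : Y.Nonempty) (hYconv : Convex ℝ Y)
    (d₀ : ℝ) (hd₀ : d₀ = sInf ((fun y => N (x₀ - y) z) '' Y))
    (y₀ y₀' : X) (hy₀ : y₀ ∈ Y) (hy₀' : y₀' ∈ Y)
    (h₁ : N (x₀ - y₀) z = d₀) (h₂ : N (x₀ - y₀') z = d₀) :
    N (y₀ - y₀') z = 0 ∧ ¬ LinearIndependent ℝ ![y₀ - y₀', z] := by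
  -- the semi-inner "square"
  set p2 : X → ℝ := fun x => ‖x‖ ^ 2 * ‖z‖ ^ 2 - (inner ℝ x z : ℝ) ^ 2 with hp2
  have hp2' : ∀ x : X, p2 x = (inner ℝ x x : ℝ) * (inner ℝ z z : ℝ) - (inner ℝ x z : ℝ) ^ 2 := by
    intro x
    simp only [hp2, real_inner_self_eq_norm_sq]
  have hp2nn : ∀ x : X, 0 ≤ p2 x := by
    intro x
    have := real_inner_mul_inner_self_le x z
    simp only [hp2]
    nlinarith [this, real_inner_self_eq_norm_sq x, real_inner_self_eq_norm_sq z]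
  have hNsq : ∀ x : X, N x z ^ 2 = p2 x := by
    intro x; rw [hN]; exact Real.sq_sqrt (hp2nn x)
  have hNnn : ∀ x : X, 0 ≤ N x z := by
    intro x; rw [hN]; exact Real.sqrt_nonneg _
  -- d₀ nonneg and d₀ ≤ N (x₀ - m) z for m ∈ Y
  have hbdd : BddBelow ((fun y => N (x₀ - y) z) '' Y) := by
    refine ⟨0, fun r hr => ?_⟩
    rcases hr with ⟨y, _, rfl⟩
    exact hNnn _
  have hd₀le : ∀ m ∈ Y, d₀ ≤ N (x₀ - m) z := by
    intro m hm
    rw [hd₀]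
    exact csInf_le hbdd ⟨m, hm, rfl⟩
  have hd₀nn : 0 ≤ d₀ := h₁ ▸ hNnn _
  -- midpoint
  set m := (1/2 : ℝ) • y₀ + (1/2 : ℝ) • y₀' with hm
  have hmY : m ∈ Y := hYconv hy₀ hy₀' (by norm_num) (by norm_num) (by norm_num)
  -- parallelogram
  set u := x₀ - y₀ with hu
  set v := x₀ - y₀' with hv
  have hpar : p2 (u + v) + p2 (u - v) = 2 * p2 u + 2 * p2 v := by
    simp only [hp2', inner_add_add_self, inner_sub_sub_self, inner_add_left, inner_sub_left,
      inner_add_right, inner_sub_right, real_inner_comm u v]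
    ring
  have huv : u + v = (2 : ℝ) • (x₀ - m) := by
    simp only [hu, hv, hm]
    module
  have hscale : p2 ((2:ℝ) • (x₀ - m)) = 4 * p2 (x₀ - m) := by
    simp only [hp2', real_inner_smul_left, real_inner_smul_right]
    ring
  have hge : 4 * d₀ ^ 2 ≤ p2 (u + v) := by
    rw [huv, hscale]
    have h := hd₀le m hmY
    have := hNsq (x₀ - m)
    nlinarith [hNnn (x₀ - m)]
  have hu2 : p2 u = d₀ ^ 2 := by rw [← hNsq, h₁]
  have hv2 : p2 v = d₀ ^ 2 := by rw [← hNsq, h₂]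
  have hzero : p2 (u - v) = 0 := by
    have := hp2nn (u - v)
    nlinarith
  have huv' : u - v = y₀' - y₀ := by rw [hu, hv]; abel
  have hneg : p2 (y₀ - y₀') = p2 (y₀' - y₀) := by
    have h3 : y₀ - y₀' = -(y₀' - y₀) := by abel
    simp only [hp2, h3, inner_neg_left, norm_neg]
    ring
  have hkey : p2 (y₀ - y₀') = 0 := by rw [hneg, ← huv', hzero]
  have hNzero : N (y₀ - y₀') z = 0 := by
    rw [hN]
    rw [hp2] at hkey
    simp only [hkey]
    exact Real.sqrt_zero
  refine ⟨hNzero, ?_⟩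
  intro li
  set w := y₀ - y₀' with hw
  have hw0 : w ≠ 0 := by
    have := li.ne_zero 0
    simpa using this
  have hz0 : z ≠ 0 := by
    have := li.ne_zero 1
    simpa using this
  -- equality in Cauchy-Schwarz
  have heq : ‖(inner ℝ w z : ℝ)‖ = ‖w‖ * ‖z‖ := by
    have h1 : (inner ℝ w z : ℝ) ^ 2 = ‖w‖ ^ 2 * ‖z‖ ^ 2 := by
      have := hkey; simp only [hp2] at this; linarith
    rw [Real.norm_eq_abs]
    have h2 : |(inner ℝ w z : ℝ)| ^ 2 = (‖w‖ * ‖z‖) ^ 2 := by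
      rw [sq_abs, h1]; ring
    have ha : (0:ℝ) ≤ |(inner ℝ w z : ℝ)| := abs_nonneg _
    have hb : (0:ℝ) ≤ ‖w‖ * ‖z‖ := mul_nonneg (norm_nonneg w) (norm_nonneg z)
    nlinarith [sq_nonneg (|(inner ℝ w z : ℝ)| - ‖w‖ * ‖z‖), sq_nonneg (|(inner ℝ w z : ℝ)| + ‖w‖ * ‖z‖)]
  obtain ⟨r, hr, hrz⟩ := (norm_inner_eq_norm_iff (𝕜 := ℝ) hw0 hz0).1 heq
  have := LinearIndependent.pair_iff.1 li r (-1) (by rw [hrz]; module)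
  exact absurd this.2 (by norm_num)
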